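/- Let U be an M×M unitary complex matrix and let k_1,…,k_N be distinct elements of {1,…,M}. Then the sum over all N-tuples (l_1,…,l_N) ∈ {1,…,M}^N of |per U(k_1…k_N | l_1…l_N)|² equals N!. -/

import Mathlib

open Finset

/-- The permanent of an `N × N` matrix: `per A = Σ_{σ ∈ S_N} ∏_i A i (σ i)`. -/
noncomputable def perm {N : ℕ} (A : Matrix (Fin N) (Fin N) ℂ) : ℂ :=
  ∑ σ : Equiv.Perm (Fin N), ∏ i : Fin N, A i (σ i)

/-- **Normalization of the Boson Sampling output distribution.**
For a unitary `M × M` matrix `U` and distinct input ports `k₁,…,k_N`, the sum over all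
`N`-tuples `(l₁,…,l_N) ∈ {1,…,M}^N` of `|per U(k₁…k_N|l₁…l_N)|²` equals `N!`. -/
theorem sum_abs_sq_permanent_unitary (M N : ℕ) (U : Matrix (Fin M) (Fin M) ℂ)
    (hU : U ∈ Matrix.unitaryGroup (Fin M) ℂ)
    (k : Fin N → Fin M) (hk : Function.Injective k) :
    ∑ l : Fin N → Fin M, ‖perm (fun i j => U (k i) (l j))‖ ^ 2 = (N.factorial : ℝ) := by
  have hUU : U * star U = 1 := (Matrix.mem_unitaryGroup_iff).mp hU
  have hinner : ∀ a b : Fin M, ∑ m : Fin M, U a m * (starRingEnd ℂ) (U b m)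
      = if a = b then 1 else 0 := by
    intro a b
    have := congrArg (fun A : Matrix (Fin M) (Fin M) ℂ => A a b) hUU
    simpa [Matrix.mul_apply, Matrix.one_apply, Matrix.conjTranspose_apply] using this
  have key : ∀ σ τ : Equiv.Perm (Fin N),
      ∑ l : Fin N → Fin M, (∏ i, U (k i) (l (σ i))) * (starRingEnd ℂ) (∏ i, U (k i) (l (τ i)))
      = if σ = τ then 1 else 0 := by
    intro σ τ
    have h1 : ∀ l : Fin N → Fin M,
        (∏ i, U (k i) (l (σ i))) * (starRingEnd ℂ) (∏ i, U (k i) (l (τ i)))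
        = ∏ j, (U (k (σ⁻¹ j)) (l j) * (starRingEnd ℂ) (U (k (τ⁻¹ j)) (l j))) := by
      intro l
      have ha : (∏ i, U (k i) (l (σ i))) = ∏ j, U (k (σ⁻¹ j)) (l j) := by
        rw [← Equiv.prod_comp σ (fun j => U (k (σ⁻¹ j)) (l j))]; simp
      have hb : (∏ i, (starRingEnd ℂ) (U (k i) (l (τ i))))
          = ∏ j, (starRingEnd ℂ) (U (k (τ⁻¹ j)) (l j)) := by
        rw [← Equiv.prod_comp τ (fun j => (starRingEnd ℂ) (U (k (τ⁻¹ j)) (l j)))]; simp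
      rw [map_prod, ha, hb, ← Finset.prod_mul_distrib]
    simp_rw [h1]
    rw [← Fintype.prod_sum (fun j m => U (k (σ⁻¹ j)) m * (starRingEnd ℂ) (U (k (τ⁻¹ j)) m))]
    simp_rw [hinner]
    by_cases hστ : σ = τ
    · subst hστ; simp
    · rw [if_neg hστ]
      obtain ⟨j, hj⟩ : ∃ j, σ⁻¹ j ≠ τ⁻¹ j := by
        by_contra h
        push_neg at h
        refine hστ (Equiv.ext fun i => ?_)
        have h2 := h (σ i)
        simp only [Equiv.Perm.inv_def, Equiv.symm_apply_apply] at h2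
        have := congrArg τ h2
        simpa using this.symm
      refine Finset.prod_eq_zero (Finset.mem_univ j) ?_
      rw [if_neg (fun h => hj (hk h))]
  have hC : ∑ l : Fin N → Fin M, perm (fun i j => U (k i) (l j)) *
      (starRingEnd ℂ) (perm (fun i j => U (k i) (l j))) = (N.factorial : ℂ) := by
    simp_rw [perm, map_sum, Finset.sum_mul_sum]
    rw [Finset.sum_comm]
    refine Eq.trans (Finset.sum_congr rfl fun σ _ => Finset.sum_comm) ?_
    simp_rw [key]
    simp [Fintype.card_perm]
  have hR : ∀ z : ℂ, ‖z‖ ^ 2 = (z * (starRingEnd ℂ) z).re := by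
    intro z
    rw [Complex.mul_conj, Complex.ofReal_re, ← Complex.sq_norm]
  calc ∑ l : Fin N → Fin M, ‖perm (fun i j => U (k i) (l j))‖ ^ 2
      = (∑ l : Fin N → Fin M, perm (fun i j => U (k i) (l j)) *
          (starRingEnd ℂ) (perm (fun i j => U (k i) (l j)))).re := by
        rw [Complex.re_sum]; exact Finset.sum_congr rfl fun l _ => hR _
    _ = (N.factorial : ℝ) := by rw [hC]; simp
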